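/- arXiv:2105.10184 — 4 statements merged into one kernel-verified Lean document; each statement's English description precedes it below -/
import Mathlib

section
/- If a graph G contains a walk of length h (in the graph with a loop added at each vertex) such that each vertex of G appears at most r times on the walk, then the treedepth of G is at least ⌈log_{r+1}(h+2)⌉. -/
open scoped Classical

variable {V : Type*}

/-- Reachability within a vertex subset `s` of `G` (walks staying inside `s`). -/
def reachIn (G : SimpleGraph V) (s : Finset V) (x y : V) : Prop :=
  Relation.ReflTransGen (fun a b => a ∈ s ∧ b ∈ s ∧ G.Adj a b) x y

/-- The induced subgraph of `G` on `s` is connected. -/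
def connOn (G : SimpleGraph V) (s : Finset V) : Prop :=
  ∀ x ∈ s, ∀ y ∈ s, reachIn G s x y

/-- The connected component of `v` in the induced subgraph of `G` on `s`. -/
noncomputable def compOf [DecidableEq V] (G : SimpleGraph V) (s : Finset V) (v : V) : Finset V :=
  s.filter (fun u => reachIn G s v u)

/-- Fueled recursive definition of treedepth of the induced subgraph on `s`. -/
noncomputable def tdAux [DecidableEq V] (G : SimpleGraph V) : ℕ → Finset V → ℕ
  | 0, s => s.card
  | n + 1, s =>
    if h : s.card ≤ 1 then s.card
    else if connOn G s then
      1 + s.inf' (Finset.card_pos.mp (by omega)) (fun v => tdAux G n (s.erase v))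
    else
      s.sup (fun v => tdAux G n (compOf G s v))

/-- Treedepth of the induced subgraph of `G` on `s`. -/
noncomputable def tdOn [DecidableEq V] (G : SimpleGraph V) (s : Finset V) : ℕ :=
  tdAux G s.card s

/-- Treedepth of a finite graph `G`. -/
noncomputable def treedepth [Fintype V] [DecidableEq V] (G : SimpleGraph V) : ℕ :=
  tdOn G Finset.univ

lemma reachIn_symm {G : SimpleGraph V} {s : Finset V} {x y : V}
    (h : reachIn G s x y) : reachIn G s y x := by
  induction h with
  | refl => exact Relation.ReflTransGen.refl
  | tail hxb hbc ih =>
      exact Relation.ReflTransGen.head ⟨hbc.2.1, hbc.1, hbc.2.2.symm⟩ ih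

lemma compOf_subset (G : SimpleGraph V) [DecidableEq V] (s : Finset V) (v : V) :
    compOf G s v ⊆ s := Finset.filter_subset _ _

lemma connOn_of_compOf_eq {G : SimpleGraph V} [DecidableEq V] {s : Finset V} {v : V}
    (h : compOf G s v = s) : connOn G s := by
  intro x hx y hy
  have hx' : x ∈ compOf G s v := h.symm ▸ hx
  have hy' : y ∈ compOf G s v := h.symm ▸ hy
  exact (reachIn_symm (Finset.mem_filter.mp hx').2).trans (Finset.mem_filter.mp hy').2

lemma compOf_card_lt {G : SimpleGraph V} [DecidableEq V] {s : Finset V}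
    (hs : ¬ connOn G s) (v : V) :
    (compOf G s v).card < s.card := by
  refine lt_of_le_of_ne (Finset.card_le_card (compOf_subset G s v)) (fun hcard => ?_)
  exact hs (connOn_of_compOf_eq (Finset.eq_of_subset_of_card_le (compOf_subset G s v) hcard.ge))

lemma tdAux_congr (G : SimpleGraph V) [DecidableEq V] :
    ∀ n m (s : Finset V), s.card ≤ n → s.card ≤ m → tdAux G n s = tdAux G m s := by
  intro n
  induction n with
  | zero =>
    intro m s hn hm
    have h0 : s.card = 0 := Nat.le_zero.mp hn
    cases m with
    | zero => rfl
    | succ m => simp [tdAux, h0]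
  | succ n ih =>
    intro m s hn hm
    cases m with
    | zero =>
      have h0 : s.card = 0 := Nat.le_zero.mp hm
      simp [tdAux, h0]
    | succ m =>
      by_cases h1 : s.card ≤ 1
      · simp [tdAux, h1]
      · rw [tdAux, tdAux, dif_neg h1, dif_neg h1]
        by_cases hc : connOn G s
        · rw [if_pos hc, if_pos hc]
          congr 1
          apply Finset.inf'_congr _ rfl
          intro v hv
          have hce : (s.erase v).card = s.card - 1 := Finset.card_erase_of_mem hv
          exact ih m (s.erase v) (by omega) (by omega)
        · rw [if_neg hc, if_neg hc]
          apply Finset.sup_congr rfl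
          intro v _
          have := compOf_card_lt hc v
          exact ih m (compOf G s v) (by omega) (by omega)

lemma tdOn_eq_tdAux (G : SimpleGraph V) [DecidableEq V] {n : ℕ} {s : Finset V}
    (h : s.card ≤ n) : tdOn G s = tdAux G n s :=
  tdAux_congr G s.card n s le_rfl h

lemma count_shift (w : ℕ → V) (a m h : ℕ) (ham : a + m ≤ h) (u : V) :
    ((Finset.range (m + 1)).filter (fun i => w (a + i) = u)).card ≤
      ((Finset.range (h + 1)).filter (fun i => w i = u)).card := by
  apply Finset.card_le_card_of_injOn (fun i => a + i)
  · intro i hi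
    simp only [Finset.mem_coe, Finset.mem_filter, Finset.mem_range] at hi ⊢
    exact ⟨by omega, hi.2⟩
  · intro x _ y _ hxy
    exact Nat.add_left_cancel hxy
lemma key (G : SimpleGraph V) [DecidableEq V] :
    ∀ (s : Finset V) (h r : ℕ) (w : ℕ → V),
    (∀ i ≤ h, w i ∈ s) →
    (∀ i < h, w i = w (i + 1) ∨ G.Adj (w i) (w (i + 1))) →
    (∀ v : V, ((Finset.range (h + 1)).filter (fun i => w i = v)).card ≤ r) →
    h + 2 ≤ (r + 1) ^ tdOn G s := by
  intro s
  induction s using Finset.strongInductionOn with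
  | _ s IH =>
  intro h r w hmem hwalk happ
  have hw0 : w 0 ∈ s := hmem 0 (Nat.zero_le _)
  have hcard1 : 1 ≤ s.card := Finset.card_pos.mpr ⟨w 0, hw0⟩
  by_cases h1 : s.card ≤ 1
  · -- single vertex
    have hs1 : s.card = 1 := le_antisymm h1 hcard1
    have htd : tdOn G s = 1 := by
      unfold tdOn
      rw [hs1, tdAux, dif_pos (by omega), hs1]
    rw [htd, pow_one]
    obtain ⟨u, hu⟩ := Finset.card_eq_one.mp hs1
    have hall : (Finset.range (h + 1)).filter (fun i => w i = u) = Finset.range (h + 1) := by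
      apply Finset.filter_true_of_mem
      intro i hi
      have hi' := Finset.mem_range.mp hi
      have hm := hmem i (by omega)
      rw [hu, Finset.mem_singleton] at hm
      exact hm
    have hcu := happ u
    rw [hall, Finset.card_range] at hcu
    omega
  · -- at least two vertices
    obtain ⟨n, hn⟩ : ∃ n, s.card = n + 1 := ⟨s.card - 1, by omega⟩
    have hn1 : 1 ≤ n := by omega
    by_cases hc : connOn G s
    · -- connected case
      have hne : s.Nonempty := Finset.card_pos.mp (by omega)
      have hunfold : tdOn G s =
          1 + s.inf' hne (fun v => tdAux G n (s.erase v)) := by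
        unfold tdOn
        rw [hn, tdAux, dif_neg (by omega), if_pos hc]
      obtain ⟨v₀, hv₀, hmin⟩ := Finset.exists_mem_eq_inf' hne (fun v => tdAux G n (s.erase v))
      have herase : (s.erase v₀).card = n := by
        rw [Finset.card_erase_of_mem hv₀]; omega
      have htd : tdOn G s = 1 + tdOn G (s.erase v₀) := by
        rw [hunfold, hmin, tdOn_eq_tdAux G (le_of_eq herase)]
      set d := tdOn G (s.erase v₀) with hd
      set B := (r + 1) ^ d with hBdef
      have hB : 1 ≤ B := Nat.one_le_pow _ _ (Nat.succ_pos r)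
      have hsub : s.erase v₀ ⊂ s := Finset.erase_ssubset hv₀
      -- any v₀-free segment of the walk has bounded length
      have seg : ∀ a m, a + m ≤ h → (∀ i ≤ m, w (a + i) ≠ v₀) → m + 2 ≤ B := by
        intro a m ham hfree
        refine IH _ hsub m r (fun i => w (a + i)) ?_ ?_ ?_
        · intro i hi
          exact Finset.mem_erase.mpr ⟨hfree i hi, hmem (a + i) (by omega)⟩
        · intro i hi
          have := hwalk (a + i) (by omega)
          rwa [show a + i + 1 = a + (i + 1) by omega] at this
        · intro v
          refine le_trans (Finset.card_le_card_of_injOn (fun i => a + i) ?_ ?_) (happ v)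
          · intro i hi
            simp only [Finset.mem_coe, Finset.mem_filter, Finset.mem_range] at hi ⊢
            exact ⟨by omega, hi.2⟩
          · intro x _ y _ hxy
            exact Nat.add_left_cancel hxy
      have claim : ∀ h' a, a + h' ≤ h →
          h' + 2 ≤ (((Finset.range (h' + 1)).filter (fun i => w (a + i) = v₀)).card + 1) * B := by
        intro h'
        induction h' using Nat.strong_induction_on with
        | _ h' Cih =>
        intro a hah
        set T := (Finset.range (h' + 1)).filter (fun i => w (a + i) = v₀) with hT
        set k := T.card with hk
        by_cases hocc : T.Nonempty
        · set j := T.max' hocc with hj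
          have hjT : j ∈ T := T.max'_mem hocc
          have hjle : j ≤ h' := by
            have hjr := Finset.mem_range.mp (Finset.mem_filter.mp hjT).1
            omega
          have hjv : w (a + j) = v₀ := (Finset.mem_filter.mp hjT).2
          have hjmax : ∀ i ∈ T, i ≤ j := fun i hi => T.le_max' i hi
          -- count in a prefix range is < k
          have hpre : ∀ p, p ≤ j →
              ((Finset.range p).filter (fun i => w (a + i) = v₀)).card + 1 ≤ k := by
            intro p hp
            have hsubT : insert j ((Finset.range p).filter (fun i => w (a + i) = v₀)) ⊆ T := by
              intro x hx
              rcases Finset.mem_insert.mp hx with rfl | hx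
              · exact hjT
              · have := Finset.mem_filter.mp hx
                exact Finset.mem_filter.mpr ⟨Finset.mem_range.mpr (by
                  have := Finset.mem_range.mp this.1; omega), this.2⟩
            have hjnot : j ∉ (Finset.range p).filter (fun i => w (a + i) = v₀) := by
              intro hmem'
              have := Finset.mem_range.mp (Finset.mem_filter.mp hmem').1
              omega
            calc ((Finset.range p).filter (fun i => w (a + i) = v₀)).card + 1
                = (insert j ((Finset.range p).filter (fun i => w (a + i) = v₀))).card := by
                  rw [Finset.card_insert_of_notMem hjnot]
              _ ≤ k := Finset.card_le_card hsubT
          have hk1 : 1 ≤ k := Finset.card_pos.mpr hocc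
          rcases Nat.lt_or_ge j h' with hjlt | hjge
          · -- j < h' : v₀-free suffix [a+j+1, a+h']
            have hsuffix : h' - j + 1 ≤ B := by
              have := seg (a + j + 1) (h' - j - 1) (by omega) ?_
              · omega
              · intro i hi heq
                have : j + 1 + i ∈ T := Finset.mem_filter.mpr
                  ⟨Finset.mem_range.mpr (by omega),
                   by rwa [show a + (j + 1 + i) = a + j + 1 + i by omega]⟩
                have := hjmax _ this
                omega
            rcases Nat.eq_zero_or_pos j with hj0 | hjpos
            · -- j = 0
              calc h' + 2 ≤ B + 1 := by omega
                _ ≤ 2 * B := by omega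
                _ ≤ (k + 1) * B := Nat.mul_le_mul (by omega) le_rfl
            · -- j ≥ 1 : apply Cih to prefix of length j - 1
              have hprefix : j + 1 ≤ k * B := by
                have hC := Cih (j - 1) (by omega) a (by omega)
                have hcnt := hpre (j - 1 + 1) (by omega)
                calc j + 1 = (j - 1) + 2 := by omega
                  _ ≤ (((Finset.range (j - 1 + 1)).filter (fun i => w (a + i) = v₀)).card + 1) * B := hC
                  _ ≤ k * B := Nat.mul_le_mul hcnt le_rfl
              calc h' + 2 = (j + 1) + (h' - j + 1) := by omega
                _ ≤ k * B + B := Nat.add_le_add hprefix hsuffix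
                _ = (k + 1) * B := by ring
          · -- j = h'
            have hjeq : j = h' := le_antisymm hjle hjge
            rcases Nat.eq_zero_or_pos h' with rfl | hpos
            · calc 0 + 2 = 2 * 1 := by norm_num
                _ ≤ (k + 1) * B := Nat.mul_le_mul (by omega) hB
            · have hC := Cih (h' - 1) (by omega) a (by omega)
              have hcnt := hpre (h' - 1 + 1) (by omega)
              have : h' + 1 ≤ k * B := by
                calc h' + 1 = (h' - 1) + 2 := by omega
                  _ ≤ (((Finset.range (h' - 1 + 1)).filter (fun i => w (a + i) = v₀)).card + 1) * B := hC
                  _ ≤ k * B := Nat.mul_le_mul hcnt le_rfl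
              calc h' + 2 ≤ k * B + 1 := by omega
                _ ≤ k * B + B := by omega
                _ = (k + 1) * B := by ring
        · -- no occurrence of v₀
          have hfree : ∀ i ≤ h', w (a + i) ≠ v₀ := by
            intro i hi heq
            exact hocc ⟨i, Finset.mem_filter.mpr ⟨Finset.mem_range.mpr (by omega), heq⟩⟩
          have := seg a h' hah hfree
          calc h' + 2 ≤ B := this
            _ = 1 * B := (one_mul B).symm
            _ ≤ (k + 1) * B := Nat.mul_le_mul (by omega) le_rfl
      have hmain := claim h 0 (by omega)
      have hcount : ((Finset.range (h + 1)).filter (fun i => w (0 + i) = v₀)).card ≤ r := by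
        have hfe : (Finset.range (h + 1)).filter (fun i => w (0 + i) = v₀) =
            (Finset.range (h + 1)).filter (fun i => w i = v₀) :=
          Finset.filter_congr (fun i _ => by rw [Nat.zero_add])
        rw [hfe]
        exact happ v₀
      calc h + 2 ≤ (((Finset.range (h + 1)).filter (fun i => w (0 + i) = v₀)).card + 1) * B := hmain
        _ ≤ (r + 1) * B := Nat.mul_le_mul (by omega) le_rfl
        _ = (r + 1) ^ (1 + d) := by rw [pow_add, pow_one]
        _ = (r + 1) ^ tdOn G s := by rw [htd]
    · -- disconnected case
      set t := compOf G s (w 0) with ht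
      have hmemt : ∀ i ≤ h, w i ∈ t := by
        intro i hi
        induction i with
        | zero =>
          exact Finset.mem_filter.mpr ⟨hw0, Relation.ReflTransGen.refl⟩
        | succ i ih2 =>
          have hit : w i ∈ t := ih2 (by omega)
          have hreach : reachIn G s (w 0) (w i) := (Finset.mem_filter.mp hit).2
          rcases hwalk i (by omega) with heq | hadj
          · rw [← heq]; exact hit
          · exact Finset.mem_filter.mpr ⟨hmem (i + 1) hi,
              hreach.tail ⟨hmem i (by omega), hmem (i + 1) hi, hadj⟩⟩
      have htlt : t.card < s.card := compOf_card_lt hc (w 0)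
      have htsub : t ⊂ s := Finset.ssubset_iff_subset_ne.mpr
        ⟨compOf_subset G s (w 0), fun he => by rw [he] at htlt; omega⟩
      have hIHt := IH t htsub h r w hmemt hwalk happ
      have htdle : tdOn G t ≤ tdOn G s := by
        have hunfold : tdOn G s = s.sup (fun v => tdAux G n (compOf G s v)) := by
          unfold tdOn
          rw [hn, tdAux, dif_neg (by omega), if_neg hc]
        have : tdOn G t = tdAux G n t := tdOn_eq_tdAux G (by omega)
        rw [hunfold, this]
        exact Finset.le_sup (f := fun v => tdAux G n (compOf G s v)) hw0
      exact le_trans hIHt (Nat.pow_le_pow_right (by omega) htdle)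

/-- If a graph `G` contains a walk of length `h` (in the graph with a loop added at
each vertex) on which each vertex appears at most `r` times, then
`td(G) ≥ ⌈log_{r+1}(h+2)⌉`. -/
theorem walk_treedepth_bound {V : Type*} [Fintype V] [DecidableEq V]
    (G : SimpleGraph V) (h r : ℕ) (w : ℕ → V)
    (hwalk : ∀ i < h, w i = w (i + 1) ∨ G.Adj (w i) (w (i + 1)))
    (happ : ∀ v : V, ((Finset.range (h + 1)).filter (fun i => w i = v)).card ≤ r) :
    ⌈Real.logb ((r : ℝ) + 1) ((h : ℝ) + 2)⌉ ≤ (treedepth G : ℤ) := by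
  have hr : 1 ≤ r := by
    have h0 : 0 ∈ (Finset.range (h + 1)).filter (fun i => w i = w 0) := by
      simp
    have := Finset.card_pos.mpr ⟨0, h0⟩
    have := happ (w 0)
    omega
  have hkey : h + 2 ≤ (r + 1) ^ treedepth G :=
    key G Finset.univ h r w (fun i _ => Finset.mem_univ _) hwalk happ
  have hb : (1 : ℝ) < (r : ℝ) + 1 := by
    have : (1 : ℝ) ≤ (r : ℝ) := by exact_mod_cast hr
    linarith
  have hreal : ((h : ℝ) + 2) ≤ ((r : ℝ) + 1) ^ (treedepth G) := by
    exact_mod_cast hkey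
  have hlog : Real.logb ((r : ℝ) + 1) ((h : ℝ) + 2) ≤ (treedepth G : ℝ) := by
    calc Real.logb ((r : ℝ) + 1) ((h : ℝ) + 2)
        ≤ Real.logb ((r : ℝ) + 1) (((r : ℝ) + 1) ^ treedepth G) :=
          Real.logb_le_logb_of_le hb (by positivity) hreal
      _ = (treedepth G : ℝ) := by
          rw [Real.logb_pow, Real.logb_self_eq_one hb]
          ring
  rw [Int.ceil_le]
  push_cast
  exact hlog
end

section
/- Removing a vertex u that appears exactly q times on a walk w of length h (in a graph with loops added at each vertex) splits w into q+1 subwalks avoiding u, and the longest of these subwalks has length at least (h+2)/(q+1) − 2. -/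
open scoped Classical

lemma aux_walk_split {V : Type*} [DecidableEq V] :
    ∀ (q h : ℕ) (w : ℕ → V) (u : V),
      ((Finset.range (h + 1)).filter (fun i => w i = u)).card = q →
      ∃ a b : ℕ, a ≤ b ∧ b ≤ h + 1 ∧ (∀ i, a ≤ i → i < b → w i ≠ u) ∧
        h + 2 ≤ (q + 1) * (b - a + 1) := by
  intro q
  induction q with
  | zero =>
    intro h w u hc
    refine ⟨0, h + 1, by omega, le_refl _, ?_, by omega⟩
    intro i _ hi heq
    have hmem : i ∈ (Finset.range (h + 1)).filter (fun i => w i = u) := by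
      simp only [Finset.mem_filter, Finset.mem_range]
      exact ⟨by omega, heq⟩
    rw [Finset.card_eq_zero.mp hc] at hmem
    exact absurd hmem (Finset.notMem_empty i)
  | succ q ih =>
    intro h w u hc
    set S := (Finset.range (h + 1)).filter (fun i => w i = u) with hS
    have hne : S.Nonempty := by rw [← Finset.card_pos, hc]; omega
    obtain ⟨m, hmS, hmin⟩ := S.exists_min_image id hne
    have hmrange : m < h + 1 := Finset.mem_range.mp (Finset.mem_filter.mp hmS).1
    have hwm : w m = u := (Finset.mem_filter.mp hmS).2
    have hbefore : ∀ i < m, w i ≠ u := by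
      intro i hi heq
      have hiS : i ∈ S := Finset.mem_filter.mpr ⟨Finset.mem_range.mpr (by omega), heq⟩
      have := hmin i hiS
      simp only [id] at this
      omega
    by_cases hm : m = h
    · have hsub : S ⊆ {h} := by
        intro i hiS
        have h1 := hmin i hiS
        have h2 := Finset.mem_range.mp (Finset.mem_filter.mp hiS).1
        simp only [id] at h1
        simp only [Finset.mem_singleton]
        omega
      have hcard1 : S.card ≤ 1 := le_trans (Finset.card_le_card hsub) (by simp)
      have hq0 : q = 0 := by omega
      refine ⟨0, h, by omega, by omega, fun i _ hi => hbefore i (by omega), ?_⟩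
      subst hq0; omega
    · have hmh : m < h := lt_of_le_of_ne (by omega) hm
      set T := (Finset.range (h - m)).filter (fun i => w (m + 1 + i) = u) with hT
      have hST : S = insert m (T.image (fun i => m + 1 + i)) := by
        ext i
        simp only [hS, hT, Finset.mem_insert, Finset.mem_image, Finset.mem_filter,
          Finset.mem_range]
        constructor
        · rintro ⟨hi, hwi⟩
          rcases lt_trichotomy i m with h1 | h1 | h1
          · exact absurd hwi (hbefore i h1)
          · exact Or.inl h1
          · exact Or.inr ⟨i - (m + 1), ⟨by omega, by rw [show m + 1 + (i - (m+1)) = i by omega]; exact hwi⟩, by omega⟩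
        · rintro (rfl | ⟨j, ⟨hj, hwj⟩, rfl⟩)
          · exact ⟨hmrange, hwm⟩
          · exact ⟨by omega, hwj⟩
      have hTcard : T.card = q := by
        have hnotmem : m ∉ T.image (fun i => m + 1 + i) := by
          simp only [Finset.mem_image]
          rintro ⟨j, _, hj⟩; omega
        have hinj : Set.InjOn (fun i => m + 1 + i) T := fun a _ b _ hab => by simpa using hab
        have := hc
        rw [hST, Finset.card_insert_of_notMem hnotmem, Finset.card_image_of_injOn hinj] at this
        omega
      have hT' : T = (Finset.range (h - m - 1 + 1)).filter (fun i => w (m + 1 + i) = u) := by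
        have he : h - m - 1 + 1 = h - m := by omega
        rw [hT, he]
      rw [hT'] at hTcard
      obtain ⟨a', b', hab', hb', havoid', hineq'⟩ := ih (h - m - 1) (fun i => w (m + 1 + i)) u hTcard
      obtain ⟨d, rfl⟩ : ∃ d, b' = a' + d := ⟨b' - a', by omega⟩
      have hineq2 : h + 1 ≤ m + (q + 1) * (d + 1) := by
        have : a' + d - a' + 1 = d + 1 := by omega
        rw [this] at hineq'
        omega
      by_cases hcmp : d + 1 ≤ m + 1
      · refine ⟨0, m, by omega, by omega, fun i _ hi => hbefore i hi, ?_⟩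
        have : m - 0 + 1 = m + 1 := by omega
        rw [this]
        nlinarith
      · refine ⟨m + 1 + a', m + 1 + (a' + d), by omega, by omega, ?_, ?_⟩
        · intro i hi1 hi2 heq
          have hw : w (m + 1 + (i - (m + 1))) = u := by
            rw [show m + 1 + (i - (m + 1)) = i by omega]; exact heq
          exact havoid' (i - (m + 1)) (by omega) (by omega) hw
        · have : m + 1 + (a' + d) - (m + 1 + a') + 1 = d + 1 := by omega
          rw [this]
          nlinarith

/-- Removing a vertex `u` that appears exactly `q` times on a walk `w` of length `h`
(in a graph with loops added at each vertex) splits `w` into `q+1` subwalks avoiding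
`u`, and the longest of these subwalks has length at least `(h+2)/(q+1) − 2`.
A (possibly empty) contiguous block `[a, b)` of indices avoiding `u` has `b - a`
vertices, i.e. it is a subwalk of length `b - a - 1`. -/
theorem walk_remove_vertex_long_subwalk {V : Type*} [DecidableEq V]
    (G : SimpleGraph V) (h q : ℕ) (w : ℕ → V) (u : V)
    (hwalk : ∀ i < h, w i = w (i + 1) ∨ G.Adj (w i) (w (i + 1)))
    (hq : ((Finset.range (h + 1)).filter (fun i => w i = u)).card = q) :
    ∃ a b : ℕ, a ≤ b ∧ b ≤ h + 1 ∧ (∀ i, a ≤ i → i < b → w i ≠ u) ∧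
      ((h : ℝ) + 2) / ((q : ℝ) + 1) - 2 ≤ (b : ℝ) - (a : ℝ) - 1 := by
  obtain ⟨a, b, hab, hb, havoid, hineq⟩ := aux_walk_split q h w u hq
  refine ⟨a, b, hab, hb, havoid, ?_⟩
  have hq1 : (0 : ℝ) < (q : ℝ) + 1 := by positivity
  rw [div_sub' (ne_of_gt hq1), div_le_iff₀ hq1]
  have hcast : ((h : ℝ) + 2 ≤ ((q : ℝ) + 1) * ((b : ℝ) - a + 1)) := by
    have : ((b : ℝ) - a + 1) = ((b - a + 1 : ℕ) : ℝ) := by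
      push_cast [Nat.cast_sub hab]; ring
    rw [this]
    calc ((h : ℝ) + 2) = ((h + 2 : ℕ) : ℝ) := by push_cast; ring
      _ ≤ (((q + 1) * (b - a + 1) : ℕ) : ℝ) := by exact_mod_cast hineq
      _ = ((q : ℝ) + 1) * ((b - a + 1 : ℕ) : ℝ) := by push_cast; ring
  nlinarith [hcast]
end

section
/- Suppose an n-vertex graph G has a vertex cover C of size k, and every vertex v ∈ V satisfies f_1(v) ≤ deg(v) + 1 and f_2(v) ≤ deg(v), where for vertices in the initial seed sets f_2(v) ≤ deg(v) holds. If the additional seed sets are chosen as T_a = C \ S_a and T_b = C \ S_b, then after the two-opinion activation process stabilizes, every vertex either has both opinions or neither: specifically, every vertex v ∈ C has both opinions from round 0; every vertex v ∉ C with v ∈ S_a ∪ S_b acquires the second opinion; and every vertex v ∉ C ∪ S_a ∪ S_b with f_1(v) ≤ deg(v) acquires both opinions, while those with f_1(v) = deg(v)+1 acquire neither. -/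
open scoped Classical

variable {V : Type*}

/-- Number of neighbors of `v` that lie in `s`. -/
noncomputable def nbrCount [Fintype V] (G : SimpleGraph V) (s : Finset V) (v : V) : ℕ :=
  (s.filter fun u => G.Adj v u).card

/-- One update step for one opinion: `Pc` is the set holding this opinion,
`Pnc` the set holding the other opinion. -/
noncomputable def updOp [Fintype V] (G : SimpleGraph V) (f1 f2 : V → ℕ)
    (Pc Pnc : Finset V) : Finset V :=
  Pc ∪ Finset.univ.filter (fun v =>
    (v ∉ Pc ∧ v ∉ Pnc ∧ f1 v ≤ nbrCount G Pc v) ∨ (v ∈ Pnc ∧ f2 v ≤ nbrCount G Pc v))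

/-- The two-opinion activation process: `(proc2 G f1 f2 Pa0 Pb0 i).1` is `P_a^i`
and `.2` is `P_b^i`. -/
noncomputable def proc2 [Fintype V] (G : SimpleGraph V) (f1 f2 : V → ℕ)
    (Pa0 Pb0 : Finset V) : ℕ → Finset V × Finset V
  | 0 => (Pa0, Pb0)
  | n + 1 =>
    let p := proc2 G f1 f2 Pa0 Pb0 n
    (updOp G f1 f2 p.1 p.2, updOp G f1 f2 p.2 p.1)

/-- Selector for an opinion: `true` is opinion `a`, `false` is opinion `b`. -/
noncomputable def procSel [Fintype V] (G : SimpleGraph V) (f1 f2 : V → ℕ)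
    (Pa0 Pb0 : Finset V) (c : Bool) (i : ℕ) : Finset V :=
  if c then (proc2 G f1 f2 Pa0 Pb0 i).1 else (proc2 G f1 f2 Pa0 Pb0 i).2

/-- The single-opinion target set activation process. -/
noncomputable def sproc [Fintype V] (G : SimpleGraph V) (f : V → ℕ)
    (T : Finset V) : ℕ → Finset V
  | 0 => T
  | n + 1 =>
    let P := sproc G f T n
    P ∪ Finset.univ.filter (fun v => v ∉ P ∧ f v ≤ nbrCount G P v)

private lemma nbrCount_eq_deg {V : Type*} [Fintype V] (G : SimpleGraph V) [DecidableRel G.Adj]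
    {s : Finset V} {v : V} (h : ∀ u, G.Adj v u → u ∈ s) :
    nbrCount G s v = G.degree v := by
  classical
  rw [← SimpleGraph.card_neighborFinset_eq_degree]
  unfold nbrCount
  refine congrArg Finset.card ?_
  ext u
  simp only [Finset.mem_filter, SimpleGraph.mem_neighborFinset]
  exact ⟨fun h => h.2, fun ha => ⟨h u ha, ha⟩⟩

private lemma updOp_step {V : Type*} [Fintype V] [DecidableEq V] (G : SimpleGraph V)
    [DecidableRel G.Adj] (f1 f2 : V → ℕ) (C Sa Sb : Finset V)
    (hC : ∀ u v : V, G.Adj u v → u ∈ C ∨ v ∈ C)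
    (hf2 : ∀ v : V, v ∈ Sa ∨ v ∈ Sb → f2 v ≤ G.degree v) :
    updOp G f1 f2 (Sa ∪ (C \ Sa)) (Sb ∪ (C \ Sb)) =
      Finset.univ.filter (fun v => v ∈ C ∨ v ∈ Sa ∨ v ∈ Sb ∨ f1 v ≤ G.degree v) := by
  classical
  ext v
  simp only [updOp, Finset.mem_union, Finset.mem_filter, Finset.mem_univ, true_and,
    Finset.mem_sdiff]
  by_cases hvC : v ∈ C
  · simp only [hvC]
    tauto
  · have hdeg : nbrCount G (Sa ∪ C \ Sa) v = G.degree v := by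
      refine nbrCount_eq_deg G fun u ha => ?_
      have huC : u ∈ C := (hC v u ha).resolve_left hvC
      by_cases hu : u ∈ Sa <;> simp [huC, hu]
    rw [hdeg]
    have h2 := hf2 v
    tauto

private lemma updOp_fix {V : Type*} [Fintype V] (G : SimpleGraph V) [DecidableRel G.Adj]
    (f1 f2 : V → ℕ) (C : Finset V)
    (hC : ∀ u v : V, G.Adj u v → u ∈ C ∨ v ∈ C)
    (E : Finset V) (hCE : C ⊆ E)
    (hE : ∀ v ∉ E, ¬ f1 v ≤ G.degree v) :
    updOp G f1 f2 E E = E := by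
  classical
  ext v
  simp only [updOp, Finset.mem_union, Finset.mem_filter, Finset.mem_univ, true_and]
  constructor
  · rintro (h | ⟨hv, _, hf⟩ | ⟨hv, _⟩)
    · exact h
    · exfalso
      have hvC : v ∉ C := fun h => hv (hCE h)
      have hd : nbrCount G E v = G.degree v :=
        nbrCount_eq_deg G fun u ha => hCE ((hC v u ha).resolve_left hvC)
      exact hE v hv (hd ▸ hf)
    · exact hv
  · exact Or.inl

/-- Vertex-cover seeding: if `C` is a vertex cover and the additional seed sets are
`T_a = C \ S_a`, `T_b = C \ S_b`, then once the two-opinion process stabilizes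
(after at most `2n` rounds), every vertex has both opinions or neither:
vertices of `C` have both opinions from round 0; seed vertices outside `C` acquire
the second opinion; opinion-free vertices outside `C` with `f_1(v) ≤ deg(v)` acquire
both opinions, and those with `f_1(v) = deg(v) + 1` acquire neither. -/
theorem vertex_cover_seeding {V : Type*} [Fintype V] [DecidableEq V]
    (G : SimpleGraph V) [DecidableRel G.Adj] (f1 f2 : V → ℕ)
    (C Sa Sb : Finset V)
    (hC : ∀ u v : V, G.Adj u v → u ∈ C ∨ v ∈ C)
    (hdisj : Disjoint Sa Sb)
    (hf1 : ∀ v : V, f1 v ≤ G.degree v + 1)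
    (hf2 : ∀ v ∈ Sa ∪ Sb, f2 v ≤ G.degree v) :
    (∀ v ∈ C,
        v ∈ (proc2 G f1 f2 (Sa ∪ (C \ Sa)) (Sb ∪ (C \ Sb)) 0).1 ∧
        v ∈ (proc2 G f1 f2 (Sa ∪ (C \ Sa)) (Sb ∪ (C \ Sb)) 0).2) ∧
    (∀ v : V, v ∉ C → v ∈ Sa ∪ Sb →
        v ∈ (proc2 G f1 f2 (Sa ∪ (C \ Sa)) (Sb ∪ (C \ Sb)) (2 * Fintype.card V)).1 ∧
        v ∈ (proc2 G f1 f2 (Sa ∪ (C \ Sa)) (Sb ∪ (C \ Sb)) (2 * Fintype.card V)).2) ∧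
    (∀ v : V, v ∉ C → v ∉ Sa ∪ Sb → f1 v ≤ G.degree v →
        v ∈ (proc2 G f1 f2 (Sa ∪ (C \ Sa)) (Sb ∪ (C \ Sb)) (2 * Fintype.card V)).1 ∧
        v ∈ (proc2 G f1 f2 (Sa ∪ (C \ Sa)) (Sb ∪ (C \ Sb)) (2 * Fintype.card V)).2) ∧
    (∀ v : V, v ∉ C → v ∉ Sa ∪ Sb → f1 v = G.degree v + 1 →
        v ∉ (proc2 G f1 f2 (Sa ∪ (C \ Sa)) (Sb ∪ (C \ Sb)) (2 * Fintype.card V)).1 ∧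
        v ∉ (proc2 G f1 f2 (Sa ∪ (C \ Sa)) (Sb ∪ (C \ Sb)) (2 * Fintype.card V)).2) := by
  classical
  set E : Finset V :=
    Finset.univ.filter (fun v => v ∈ C ∨ v ∈ Sa ∨ v ∈ Sb ∨ f1 v ≤ G.degree v) with hEdef
  have hmemE : ∀ v : V, v ∈ E ↔ (v ∈ C ∨ v ∈ Sa ∨ v ∈ Sb ∨ f1 v ≤ G.degree v) := by
    intro v; simp [hEdef]
  have hf2' : ∀ v : V, v ∈ Sa ∨ v ∈ Sb → f2 v ≤ G.degree v := by
    intro v hv; exact hf2 v (by simpa using hv)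
  have hEa : updOp G f1 f2 (Sa ∪ (C \ Sa)) (Sb ∪ (C \ Sb)) = E :=
    updOp_step G f1 f2 C Sa Sb hC hf2'
  have hEb : updOp G f1 f2 (Sb ∪ (C \ Sb)) (Sa ∪ (C \ Sa)) = E := by
    rw [updOp_step G f1 f2 C Sb Sa hC (fun v hv => hf2' v hv.symm)]
    ext v; simp [hEdef]; tauto
  have hCE : C ⊆ E := fun v hv => (hmemE v).mpr (Or.inl hv)
  have hEout : ∀ v ∉ E, ¬ f1 v ≤ G.degree v := by
    intro v hv
    rw [hmemE v] at hv
    tauto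
  have hfix : updOp G f1 f2 E E = E := updOp_fix G f1 f2 C hC E hCE hEout
  have hn : ∀ n : ℕ, proc2 G f1 f2 (Sa ∪ (C \ Sa)) (Sb ∪ (C \ Sb)) (n + 1) = (E, E) := by
    intro n
    induction n with
    | zero => simp only [proc2, hEa, hEb]
    | succ n ih =>
      show (updOp G f1 f2 (proc2 G f1 f2 (Sa ∪ (C \ Sa)) (Sb ∪ (C \ Sb)) (n + 1)).1
              (proc2 G f1 f2 (Sa ∪ (C \ Sa)) (Sb ∪ (C \ Sb)) (n + 1)).2,
            updOp G f1 f2 (proc2 G f1 f2 (Sa ∪ (C \ Sa)) (Sb ∪ (C \ Sb)) (n + 1)).2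
              (proc2 G f1 f2 (Sa ∪ (C \ Sa)) (Sb ∪ (C \ Sb)) (n + 1)).1) = (E, E)
      rw [ih]
      simp [hfix]
  have hcard : ∀ v : V, ∃ m : ℕ, 2 * Fintype.card V = m + 1 := by
    intro v
    have : 0 < Fintype.card V := Fintype.card_pos_iff.mpr ⟨v⟩
    exact ⟨2 * Fintype.card V - 1, by omega⟩
  refine ⟨?_, ?_, ?_, ?_⟩
  · intro v hv
    constructor <;> · simp only [proc2, Finset.mem_union, Finset.mem_sdiff]; tauto
  · intro v hvC hvS
    obtain ⟨m, hm⟩ := hcard v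
    rw [hm, hn m]
    simp only [Finset.mem_union] at hvS
    constructor <;> · rw [hmemE v]; tauto
  · intro v hvC hvS hvf
    obtain ⟨m, hm⟩ := hcard v
    rw [hm, hn m]
    constructor <;> · rw [hmemE v]; tauto
  · intro v hvC hvS hvf
    obtain ⟨m, hm⟩ := hcard v
    rw [hm, hn m]
    simp only [Finset.mem_union, not_or] at hvS
    constructor <;>
    · rw [hmemE v]
      push_neg
      exact ⟨hvC, hvS.1, hvS.2, by omega⟩
end

section
/- Consider the selection gadget: a graph on vertex set consisting of selection vertices I = {u_1, ..., u_m} (m ≥ 1), and two guard paths each on vertices {v_1, v_2, v_3} and {v_1', v_2', v_3'} where v_2 (resp. v_2') is adjacent to v_1, v_3 (resp. v_1', v_3') and to every selection vertex. Set S_a = {v_1, v_1'}, S_b = ∅, f_1(v_2) = f_1(v_2') = 1, f_2(v_2) = f_2(v_2') = 1, f_1(v_3) = f_1(v_3') = 1, f_2(v_3) = f_2(v_3') = 2. If T_b ∩ (I ∪ {v_1,v_2,v_3,v_1',v_2',v_3'}) = ∅ and no selection vertex ever acquires opinion b from outside, then v_3 never acquires opinion b, i.e., v_3 ∉ P_b^i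 for all i ≥ 0. -/
open scoped Classical

variable {V : Type*}

/-- Selection gadget: selection vertices `I`, two guard paths `v1-v2-v3` and
`v1'-v2'-v3'` whose central vertices `v2, v2'` are adjacent to both path endpoints
and to every selection vertex; `S_a = {v1, v1'}`, `S_b = ∅`,
`f_1(v2) = f_2(v2) = f_1(v3) = 1`, `f_2(v3) = 2` (and likewise for the primed path);
all thresholds are positive. If the extra seed set `T_b` avoids the gadget and no
selection vertex ever acquires opinion `b` (from outside), then `v3` never acquires
opinion `b`. -/
theorem selection_gadget_v3_never_b {V : Type*} [Fintype V] [DecidableEq V]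
    (G : SimpleGraph V) (f1 f2 : V → ℕ) (I : Finset V)
    (v1 v2 v3 v1' v2' v3' : V)
    (hIne : I.Nonempty)
    (hadj1 : ∀ u : V, G.Adj v1 u ↔ u = v2)
    (hadj2 : ∀ u : V, G.Adj v2 u ↔ (u = v1 ∨ u = v3 ∨ u ∈ I))
    (hadj3 : ∀ u : V, G.Adj v3 u ↔ u = v2)
    (hadj1' : ∀ u : V, G.Adj v1' u ↔ u = v2')
    (hadj2' : ∀ u : V, G.Adj v2' u ↔ (u = v1' ∨ u = v3' ∨ u ∈ I))
    (hadj3' : ∀ u : V, G.Adj v3' u ↔ u = v2')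
    (hth : f1 v2 = 1 ∧ f2 v2 = 1 ∧ f1 v3 = 1 ∧ f2 v3 = 2)
    (hth' : f1 v2' = 1 ∧ f2 v2' = 1 ∧ f1 v3' = 1 ∧ f2 v3' = 2)
    (hf1pos : ∀ v : V, 1 ≤ f1 v) (hf2pos : ∀ v : V, 1 ≤ f2 v)
    (Pa0 Pb0 : Finset V)
    (hA : v1 ∈ Pa0) (hA' : v1' ∈ Pa0)
    (hB1 : v1 ∉ Pb0) (hB2 : v2 ∉ Pb0) (hB3 : v3 ∉ Pb0)
    (hB1' : v1' ∉ Pb0) (hB2' : v2' ∉ Pb0) (hB3' : v3' ∉ Pb0)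
    (hBI : ∀ i : ℕ, ∀ u ∈ I, u ∉ (proc2 G f1 f2 Pa0 Pb0 i).2) :
    ∀ i : ℕ, v3 ∉ (proc2 G f1 f2 Pa0 Pb0 i).2 := by
  have key : ∀ i : ℕ, v1 ∉ (proc2 G f1 f2 Pa0 Pb0 i).2 ∧
      v2 ∉ (proc2 G f1 f2 Pa0 Pb0 i).2 ∧ v3 ∉ (proc2 G f1 f2 Pa0 Pb0 i).2 := by
    intro i
    induction i with
    | zero => exact ⟨hB1, hB2, hB3⟩
    | succ n ih =>
      obtain ⟨h1, h2, h3⟩ := ih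
      set Pb := (proc2 G f1 f2 Pa0 Pb0 n).2 with hPb
      -- neighbor counts in Pb are zero
      have c1 : nbrCount G Pb v1 = 0 := by
        rw [nbrCount, Finset.card_eq_zero, Finset.filter_eq_empty_iff]
        intro u hu hadj
        rw [hadj1] at hadj; subst hadj; exact h2 hu
      have c2 : nbrCount G Pb v2 = 0 := by
        rw [nbrCount, Finset.card_eq_zero, Finset.filter_eq_empty_iff]
        intro u hu hadj
        rw [hadj2] at hadj
        rcases hadj with rfl | rfl | hI
        · exact h1 hu
        · exact h3 hu
        · exact hBI n u hI hu
      have c3 : nbrCount G Pb v3 = 0 := by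
        rw [nbrCount, Finset.card_eq_zero, Finset.filter_eq_empty_iff]
        intro u hu hadj
        rw [hadj3] at hadj; subst hadj; exact h2 hu
      have step : ∀ v : V, nbrCount G Pb v = 0 → v ∉ Pb →
          v ∉ (proc2 G f1 f2 Pa0 Pb0 (n+1)).2 := by
        intro v hc hv hmem
        simp only [proc2, updOp, Finset.mem_union, Finset.mem_filter] at hmem
        rcases hmem with hmem | ⟨_, hmem⟩
        · exact hv hmem
        · rcases hmem with ⟨_, _, hle⟩ | ⟨_, hle⟩
          · rw [hc] at hle; exact absurd (le_trans (hf1pos v) hle) (by norm_num)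
          · rw [hc] at hle; exact absurd (le_trans (hf2pos v) hle) (by norm_num)
      exact ⟨step v1 c1 h1, step v2 c2 h2, step v3 c3 h3⟩
  exact fun i => (key i).2.2
end
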